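/- Let G be a countable group generated by a finite set {g_1, ..., g_n}. Then the following are equivalent: (i) there exists a C_0 unitary representation π of G that almost has invariant vectors (i.e., G has the Haagerup property); (ii) there exists a C_0 unitary representation π of G such that for every nonzero z ∈ ℂ^{n+1} with z_0 + ⋯ + z_n = 0, the operator z_0 I + z_1π(g_1) + ⋯ + z_nπ(g_n) is not invertible (i.e., H_0 ⊆ p(A_π)). -/

import Mathlib

/-- A unitary representation of a group `G` on a complex Hilbert space. -/
structure UnitaryRep (G : Type) [Group G] where
  /-- the underlying Hilbert space -/
  space : Type
  [ngroup : NormedAddCommGroup space]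
  [ips : InnerProductSpace ℂ space]
  [complete : CompleteSpace space]
  /-- the representation -/
  rep : G →* (space →L[ℂ] space)
  mem_unitary : ∀ x : G, rep x ∈ unitary (space →L[ℂ] space)

attribute [instance] UnitaryRep.ngroup UnitaryRep.ips UnitaryRep.complete

/-- A unitary representation is `C₀` if all its matrix coefficients vanish at infinity, i.e.
`{g : |⟨π(g)x, y⟩| ≥ ε}` is finite for all vectors `x, y` and all `ε > 0`. -/
def UnitaryRep.IsC0 {G : Type} [Group G] (ρ : UnitaryRep G) : Prop :=
  ∀ (x y : ρ.space) (ε : ℝ), 0 < ε → {s : G | ε ≤ ‖(inner ℂ (ρ.rep s x) y : ℂ)‖}.Finite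

/-- A unitary representation almost has invariant vectors (equivalently, it weakly contains the
trivial representation). -/
def UnitaryRep.AlmostInv {G : Type} [Group G] (ρ : UnitaryRep G) : Prop :=
  ∀ (F : Finset G) (ε : ℝ), 0 < ε → ∃ ξ : ρ.space, ‖ξ‖ = 1 ∧ ∀ s ∈ F, ‖ρ.rep s ξ - ξ‖ < ε

open ContinuousLinearMap in
/-- Lax–Milgram style: a coercive operator on a complex Hilbert space is invertible. -/
lemma isUnit_of_coercive {H : Type} [NormedAddCommGroup H] [InnerProductSpace ℂ H]
    [CompleteSpace H] (T : H →L[ℂ] H) (c : ℝ) (hc : 0 < c)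
    (h : ∀ x : H, c * ‖x‖ ^ 2 ≤ (inner ℂ (T x) x : ℂ).re) : IsUnit T := by
  have hbound : ∀ x : H, ‖x‖ ≤ (⟨c⁻¹, inv_nonneg.mpr hc.le⟩ : NNReal) * ‖T x‖ := by
    intro x
    rcases eq_or_ne x 0 with rfl | hx
    · simp
    have h1 : c * ‖x‖ ^ 2 ≤ ‖T x‖ * ‖x‖ := by
      calc c * ‖x‖ ^ 2 ≤ (inner ℂ (T x) x : ℂ).re := h x
        _ ≤ ‖(inner ℂ (T x) x : ℂ)‖ := Complex.re_le_norm _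
        _ ≤ ‖T x‖ * ‖x‖ := norm_inner_le_norm _ _
    have hxpos : 0 < ‖x‖ := norm_pos_iff.mpr hx
    show ‖x‖ ≤ c⁻¹ * ‖T x‖
    rw [le_inv_mul_iff₀ hc]
    nlinarith
  have hanti : AntilipschitzWith _ T := T.antilipschitz_of_bound hbound
  -- injective
  have hker : LinearMap.ker (T : H →ₗ[ℂ] H) = ⊥ := by
    rw [Submodule.eq_bot_iff]
    intro x hx
    exact hanti.injective (by simpa using (LinearMap.mem_ker.mp hx))
  -- closed range
  have hclosed : IsClosed (LinearMap.range (T : H →ₗ[ℂ] H) : Set H) := by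
    have := hanti.isClosed_range T.uniformContinuous
    rw [LinearMap.coe_range, ContinuousLinearMap.coe_coe]; exact this
  have hcl : (LinearMap.range (T : H →ₗ[ℂ] H)).topologicalClosure = LinearMap.range (T : H →ₗ[ℂ] H) :=
    IsClosed.submodule_topologicalClosure_eq hclosed
  haveI : CompleteSpace (LinearMap.range (T : H →ₗ[ℂ] H)) := hclosed.completeSpace_coe
  -- orthogonal complement trivial
  have horth : (LinearMap.range (T : H →ₗ[ℂ] H))ᗮ = ⊥ := by
    rw [Submodule.eq_bot_iff]
    intro x hx
    have hTx : (inner ℂ (T x) x : ℂ) = 0 :=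
      (Submodule.mem_orthogonal _ x).mp hx (T x) (LinearMap.mem_range_self _ x)
    have := h x
    rw [hTx] at this
    simp only [Complex.zero_re] at this
    have : ‖x‖ ^ 2 ≤ 0 := nonpos_of_mul_nonpos_right (by linarith) hc |>.trans (le_refl 0)
    have : ‖x‖ = 0 := by nlinarith [norm_nonneg x]
    exact norm_eq_zero.mp this
  have hrange : LinearMap.range (T : H →ₗ[ℂ] H) = ⊤ := Submodule.orthogonal_eq_bot_iff.mp horth
  let e := ContinuousLinearEquiv.ofBijective T hker hrange
  exact ⟨⟨T, e.symm.toContinuousLinearMap,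
    by ext x; simp [e, ContinuousLinearEquiv.ofBijective_symm_apply_apply],
    by ext x; simp [e]⟩, rfl⟩

lemma UnitaryRep.norm_rep_apply {G : Type} [Group G] (ρ : UnitaryRep G) (s : G) (x : ρ.space) :
    ‖ρ.rep s x‖ = ‖x‖ := by
  have h : star (ρ.rep s) * ρ.rep s = 1 := (ρ.mem_unitary s).1
  have h2 : (inner ℂ (ρ.rep s x) (ρ.rep s x) : ℂ) = inner ℂ x x := by
    have h3 := ContinuousLinearMap.adjoint_inner_left (ρ.rep s) x (ρ.rep s x)
    rw [← ContinuousLinearMap.star_eq_adjoint] at h3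
    have h4 : star (ρ.rep s) (ρ.rep s x) = x := by
      have := congrArg (fun T : ρ.space →L[ℂ] ρ.space => T x) h
      simpa using this
    rw [h4] at h3
    exact h3.symm
  have h5 : ((‖ρ.rep s x‖ : ℂ)) ^ 2 = ((‖x‖ : ℂ)) ^ 2 := by
    rwa [inner_self_eq_norm_sq_to_K, inner_self_eq_norm_sq_to_K] at h2
  have h6 : ‖ρ.rep s x‖ ^ 2 = ‖x‖ ^ 2 := by exact_mod_cast h5
  nlinarith [norm_nonneg (ρ.rep s x), norm_nonneg x]

lemma re_inner_sub_unitary {G : Type} [Group G] (ρ : UnitaryRep G) (s : G) (x : ρ.space) :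
    (inner ℂ (x - ρ.rep s x) x : ℂ).re = ‖ρ.rep s x - x‖ ^ 2 / 2 := by
  have hn : ‖ρ.rep s x‖ = ‖x‖ := ρ.norm_rep_apply s x
  have h1 : ‖ρ.rep s x - x‖ ^ 2 =
      ‖ρ.rep s x‖ ^ 2 - 2 * (inner ℂ (ρ.rep s x) x : ℂ).re + ‖x‖ ^ 2 := by
    exact_mod_cast norm_sub_sq (𝕜 := ℂ) (ρ.rep s x) x
  have h2 : (inner ℂ (x - ρ.rep s x) x : ℂ).re = ‖x‖^2 - (inner ℂ (ρ.rep s x) x : ℂ).re := by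
    rw [inner_sub_left, inner_self_eq_norm_sq_to_K]
    rw [Complex.sub_re]
    norm_cast
  rw [h1, h2, hn]; ring

/-- Step 1: non-invertibility of the Markov pencil yields almost invariant unit vectors for
the generators. -/
lemma exists_gen_almost_inv {G : Type} [Group G] (ρ : UnitaryRep G) {n : ℕ} (g : Fin n → G)
    (hT : ¬ IsUnit ((n : ℂ) • (1 : ρ.space →L[ℂ] ρ.space) +
      ∑ i : Fin n, (-1 : ℂ) • ρ.rep (g i)))
    (δ : ℝ) (hδ : 0 < δ) :
    ∃ ξ : ρ.space, ‖ξ‖ = 1 ∧ ∀ i, ‖ρ.rep (g i) ξ - ξ‖ < δ := by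
  by_contra hcon
  push_neg at hcon
  apply hT
  set T : ρ.space →L[ℂ] ρ.space :=
    (n : ℂ) • (1 : ρ.space →L[ℂ] ρ.space) + ∑ i : Fin n, (-1 : ℂ) • ρ.rep (g i) with hTdef
  apply isUnit_of_coercive T (δ ^ 2 / 2) (by positivity)
  intro x
  rcases eq_or_ne x 0 with rfl | hx
  · simp
  -- evaluate T x
  have hTx : T x = ∑ i : Fin n, (x - ρ.rep (g i) x) := by
    have hs : (∑ i : Fin n, (x - ρ.rep (g i) x))
        = (n : ℂ) • x - ∑ i : Fin n, ρ.rep (g i) x := by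
      rw [Finset.sum_sub_distrib, Finset.sum_const, Finset.card_univ, Fintype.card_fin,
        ← Nat.cast_smul_eq_nsmul (R := ℂ)]
    rw [hs, hTdef]
    simp only [ContinuousLinearMap.add_apply, ContinuousLinearMap.smul_apply,
      ContinuousLinearMap.one_apply, ContinuousLinearMap.sum_apply, neg_smul, one_smul,
      ContinuousLinearMap.neg_apply, Finset.sum_neg_distrib, sub_eq_add_neg]
  have hre : (inner ℂ (T x) x : ℂ).re = ∑ i : Fin n, ‖ρ.rep (g i) x - x‖ ^ 2 / 2 := by
    rw [hTx, sum_inner]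
    rw [Complex.re_sum]
    exact Finset.sum_congr rfl fun i _ => re_inner_sub_unitary ρ (g i) x
  rw [hre]
  -- find an index where the generator moves x/\|x\| by at least δ
  have hxn : (0 : ℝ) < ‖x‖ := norm_pos_iff.mpr hx
  obtain ⟨i, hi⟩ := hcon ((‖x‖⁻¹ : ℂ) • x) (by
    rw [norm_smul]; simp [norm_inv, abs_of_pos hxn, inv_mul_cancel₀ hxn.ne'])
  have hi' : δ * ‖x‖ ≤ ‖ρ.rep (g i) x - x‖ := by
    have : ρ.rep (g i) ((‖x‖⁻¹ : ℂ) • x) - (‖x‖⁻¹ : ℂ) • x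
        = (‖x‖⁻¹ : ℂ) • (ρ.rep (g i) x - x) := by
      rw [map_smul, smul_sub]
    rw [this, norm_smul] at hi
    simp only [norm_inv, Complex.norm_real, Real.norm_eq_abs, abs_of_pos hxn] at hi
    rw [le_inv_mul_iff₀ hxn] at hi
    linarith [hi]
  calc δ ^ 2 / 2 * ‖x‖ ^ 2 = (δ * ‖x‖) ^ 2 / 2 := by ring
    _ ≤ ‖ρ.rep (g i) x - x‖ ^ 2 / 2 := by
        have h0 : 0 ≤ δ * ‖x‖ := by positivity
        nlinarith
    _ ≤ ∑ i : Fin n, ‖ρ.rep (g i) x - x‖ ^ 2 / 2 :=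
        Finset.single_le_sum (f := fun j => ‖ρ.rep (g j) x - x‖ ^ 2 / 2)
          (fun j _ => by positivity) (Finset.mem_univ i)

/-- Step 2: word-length bound for approximate invariance. -/
lemma word_bound {G : Type} [Group G] (ρ : UnitaryRep G) {n : ℕ} (g : Fin n → G)
    (hgen : Subgroup.closure (Set.range g) = ⊤) (s : G) :
    ∃ m : ℕ, ∀ (ξ : ρ.space) (δ : ℝ), 0 ≤ δ → (∀ i, ‖ρ.rep (g i) ξ - ξ‖ ≤ δ) →
      ‖ρ.rep s ξ - ξ‖ ≤ m * δ := by
  have hs : s ∈ Subgroup.closure (Set.range g) := hgen.symm ▸ Subgroup.mem_top s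
  induction hs using Subgroup.closure_induction with
  | mem x hx =>
    obtain ⟨i, rfl⟩ := hx
    exact ⟨1, fun ξ δ _ h => by simpa using h i⟩
  | one => exact ⟨0, fun ξ δ _ _ => by simp⟩
  | mul x y _ _ hx hy =>
    obtain ⟨mx, hmx⟩ := hx
    obtain ⟨my, hmy⟩ := hy
    refine ⟨mx + my, fun ξ δ hδ h => ?_⟩
    have key : ρ.rep (x * y) ξ - ξ = ρ.rep x (ρ.rep y ξ - ξ) + (ρ.rep x ξ - ξ) := by
      rw [map_mul]
      simp only [map_sub, ContinuousLinearMap.mul_apply]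
      abel
    rw [key]
    calc ‖ρ.rep x (ρ.rep y ξ - ξ) + (ρ.rep x ξ - ξ)‖
        ≤ ‖ρ.rep x (ρ.rep y ξ - ξ)‖ + ‖ρ.rep x ξ - ξ‖ := norm_add_le _ _
      _ = ‖ρ.rep y ξ - ξ‖ + ‖ρ.rep x ξ - ξ‖ := by rw [ρ.norm_rep_apply]
      _ ≤ my * δ + mx * δ := add_le_add (hmy ξ δ hδ h) (hmx ξ δ hδ h)
      _ = (mx + my : ℕ) * δ := by push_cast; ring
  | inv x _ hx =>
    obtain ⟨mx, hmx⟩ := hx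
    refine ⟨mx, fun ξ δ hδ h => ?_⟩
    have key : ρ.rep x⁻¹ ξ - ξ = ρ.rep x⁻¹ (ξ - ρ.rep x ξ) := by
      rw [map_sub]
      congr 1
      rw [← ContinuousLinearMap.comp_apply, ← ContinuousLinearMap.mul_def, ← map_mul]
      simp
    rw [key, ρ.norm_rep_apply, norm_sub_rev]
    exact hmx ξ δ hδ h

/-- A countable group `G = ⟨g₁, ..., gₙ⟩` has the Haagerup property (some `C₀` representation
almost has invariant vectors) iff some `C₀` representation `π` satisfies
`H₀ ⊆ p(A_π)`, i.e. the pencil `z₀I + z₁π(g₁) + ⋯ + zₙπ(gₙ)` is not invertible for every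
nonzero `z` with `z₀ + ⋯ + zₙ = 0`. -/
theorem stmt12 {G : Type} [Group G] [Countable G] (n : ℕ) (hn : 0 < n) (g : Fin n → G)
    (hgen : Subgroup.closure (Set.range g) = ⊤) :
    (∃ ρ : UnitaryRep G, ρ.IsC0 ∧ ρ.AlmostInv) ↔
      (∃ ρ : UnitaryRep G, ρ.IsC0 ∧
        ∀ z : Fin (n + 1) → ℂ, z ≠ 0 → ∑ i, z i = 0 →
          ¬ IsUnit (z 0 • (1 : ρ.space →L[ℂ] ρ.space) +
            ∑ i : Fin n, z i.succ • ρ.rep (g i))) := by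
  constructor
  · rintro ⟨ρ, hC0, hAI⟩
    refine ⟨ρ, hC0, ?_⟩
    classical
    intro z hz hsum hUnit
    set A : ρ.space →L[ℂ] ρ.space :=
      z 0 • (1 : ρ.space →L[ℂ] ρ.space) + ∑ i : Fin n, z i.succ • ρ.rep (g i) with hA
    set u := hUnit.unit with hu
    set K := ‖(↑u⁻¹ : ρ.space →L[ℂ] ρ.space)‖ with hK
    have hKnn : 0 ≤ K := norm_nonneg _
    set M := ∑ i : Fin n, ‖z i.succ‖ with hM
    have hz0 : z 0 = -∑ i : Fin n, z i.succ := by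
      rw [Fin.sum_univ_succ] at hsum
      linear_combination hsum
    have hMnn : 0 ≤ M := Finset.sum_nonneg fun i _ => norm_nonneg _
    have hMne : M ≠ 0 := by
      intro h0
      have hzero : ∀ i : Fin n, z i.succ = 0 := by
        intro i
        have h1 := (Finset.sum_eq_zero_iff_of_nonneg
          (fun i (_ : i ∈ Finset.univ) => norm_nonneg (z i.succ))).mp (hM ▸ h0) i
          (Finset.mem_univ i)
        exact norm_eq_zero.mp h1
      apply hz
      funext j
      refine Fin.cases ?_ ?_ j
      · rw [hz0]
        simp [hzero]
      · exact hzero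
    have hMpos : 0 < M := lt_of_le_of_ne hMnn (Ne.symm hMne)
    set ε := 1 / ((K + 1) * M) with hε
    have hεpos : 0 < ε := by positivity
    obtain ⟨ξ, hξ1, hξ2⟩ := hAI (Finset.univ.image g) ε hεpos
    have hAξ : A ξ = ∑ i : Fin n, z i.succ • (ρ.rep (g i) ξ - ξ) := by
      rw [hA]
      simp only [ContinuousLinearMap.add_apply, ContinuousLinearMap.smul_apply,
        ContinuousLinearMap.one_apply, ContinuousLinearMap.sum_apply, smul_sub]
      rw [Finset.sum_sub_distrib, ← Finset.sum_smul, hz0, neg_smul]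
      abel
    have hAξnorm : ‖A ξ‖ ≤ M * ε := by
      rw [hAξ]
      calc ‖∑ i : Fin n, z i.succ • (ρ.rep (g i) ξ - ξ)‖
          ≤ ∑ i : Fin n, ‖z i.succ • (ρ.rep (g i) ξ - ξ)‖ := norm_sum_le _ _
        _ ≤ ∑ i : Fin n, ‖z i.succ‖ * ε := by
            refine Finset.sum_le_sum fun i _ => ?_
            rw [norm_smul]
            exact mul_le_mul_of_nonneg_left
              (hξ2 (g i) (Finset.mem_image_of_mem g (Finset.mem_univ i))).le (norm_nonneg _)
        _ = M * ε := by rw [← Finset.sum_mul]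
    have h1 : (1 : ℝ) ≤ K * ‖A ξ‖ := by
      have hxi : (↑u⁻¹ : ρ.space →L[ℂ] ρ.space) (A ξ) = ξ := by
        have h5 : (↑u⁻¹ * ↑u : ρ.space →L[ℂ] ρ.space) ξ = ξ := by
          rw [Units.inv_mul]; rfl
        calc (↑u⁻¹ : ρ.space →L[ℂ] ρ.space) (A ξ)
            = (↑u⁻¹ * ↑u : ρ.space →L[ℂ] ρ.space) ξ := by
              rw [ContinuousLinearMap.mul_apply, hUnit.unit_spec]
          _ = ξ := h5
      calc (1 : ℝ) = ‖ξ‖ := hξ1.symm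
        _ = ‖(↑u⁻¹ : ρ.space →L[ℂ] ρ.space) (A ξ)‖ := by rw [hxi]
        _ ≤ K * ‖A ξ‖ := ContinuousLinearMap.le_opNorm _ _
    have h2 : K * ‖A ξ‖ ≤ K * (M * ε) := mul_le_mul_of_nonneg_left hAξnorm hKnn
    have h3 : M * ε = 1 / (K + 1) := by
      rw [hε]; field_simp
    rw [h3] at h2
    have h4 : K * (1 / (K + 1)) < 1 := by
      rw [mul_one_div, div_lt_one (by linarith)]
      linarith
    linarith
  · rintro ⟨ρ, hC0, hpen⟩
    refine ⟨ρ, hC0, ?_⟩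
    intro F ε hε
    have hT : ¬ IsUnit ((n : ℂ) • (1 : ρ.space →L[ℂ] ρ.space) +
        ∑ i : Fin n, (-1 : ℂ) • ρ.rep (g i)) := by
      have := hpen (Fin.cons (n : ℂ) (fun _ => (-1 : ℂ)))
        (by
          intro h
          have h0 := congrFun h 0
          simp only [Fin.cons_zero, Pi.zero_apply] at h0
          exact_mod_cast absurd h0 (by exact_mod_cast Nat.cast_ne_zero.mpr hn.ne'))
        (by
          rw [Fin.sum_univ_succ]
          simp [Fin.cons_zero, Fin.cons_succ])
      simpa [Fin.cons_zero, Fin.cons_succ] using this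
    choose m hm using fun s => word_bound ρ g hgen s
    set M : ℕ := F.sup m + 1 with hMdef
    set δ : ℝ := ε / (M + 1) with hδdef
    have hδpos : 0 < δ := by positivity
    obtain ⟨ξ, hξ1, hξ2⟩ := exists_gen_almost_inv ρ g hT δ hδpos
    refine ⟨ξ, hξ1, fun s hs => ?_⟩
    have hb := hm s ξ δ hδpos.le fun i => (hξ2 i).le
    have hms : (m s : ℝ) ≤ M := by
      exact_mod_cast Nat.le_succ_of_le (Finset.le_sup hs)
    calc ‖ρ.rep s ξ - ξ‖ ≤ m s * δ := hb
      _ ≤ M * δ := mul_le_mul_of_nonneg_right hms hδpos.le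
      _ < (M + 1) * δ := by nlinarith
      _ = ε := by rw [hδdef]; field_simp
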